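/- Let W be a convex subset of a real normed vector space, let (Ω, F, P) be a probability space, let X and Y be random variables on Ω taking values in W, let R be a random variable taking values in [0,∞), and let A be a Borel subset of W. Then |P[X ∈ A] − P[Y ∈ A]| ≤ P[ dist(X, ∂A) < R and dist(Y, ∂A) < R ] + P[ ‖X − Y‖ ≥ R ]. -/

import Mathlib

open MeasureTheory Set

lemma preconn_frontier {α : Type*} [TopologicalSpace α] {s t : Set α}
    (hs : IsPreconnected s) (h1 : (s ∩ t).Nonempty) (h2 : (s \ t).Nonempty) :
    (s ∩ frontier t).Nonempty := by
  by_contra h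
  rw [Set.not_nonempty_iff_eq_empty] at h
  have hnf : ∀ a ∈ s, a ∉ frontier t := fun a ha hf =>
    (Set.eq_empty_iff_forall_notMem.1 h a) ⟨ha, hf⟩
  have key : s ⊆ interior t ∪ interior tᶜ := by
    intro a ha
    by_cases hat : a ∈ t
    · left
      have hcl : a ∈ closure t := subset_closure hat
      by_contra hc
      exact hnf a ha ⟨hcl, hc⟩
    · right
      have hcl : a ∈ closure tᶜ := subset_closure hat
      by_contra hc
      apply hnf a ha
      rw [← frontier_compl]
      exact ⟨hcl, hc⟩
  obtain ⟨x0, hx0⟩ := h1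
  obtain ⟨y0, hy0⟩ := h2
  have hx0' : x0 ∈ interior t := (key hx0.1).resolve_right fun hc => interior_subset hc hx0.2
  have hy0' : y0 ∈ interior tᶜ := (key hy0.1).resolve_left fun hc => hy0.2 (interior_subset hc)
  obtain ⟨a, ha⟩ := hs (interior t) (interior tᶜ) isOpen_interior isOpen_interior key
    ⟨x0, hx0.1, hx0'⟩ ⟨y0, hy0.1, hy0'⟩
  exact (interior_subset ha.2.2) (interior_subset ha.2.1)

lemma key_lemma {V : Type*} [NormedAddCommGroup V] [NormedSpace ℝ V]
    {W A : Set V} (hW : Convex ℝ W) (hAW : A ⊆ W)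
    {x y : V} (hx : x ∈ A) (hy : y ∈ W) (hyA : y ∉ A) :
    ∃ z ∈ W ∩ closure A ∩ closure (W \ A), dist x z ≤ dist x y ∧ dist y z ≤ dist x y := by
  have hseg : segment ℝ x y ⊆ W := hW.segment_subset (hAW hx) hy
  have hpre : IsPreconnected ((Subtype.val : W → V) ⁻¹' segment ℝ x y) := by
    rw [← Topology.IsInducing.subtypeVal.isPreconnected_image,
      Subtype.image_preimage_coe, Set.inter_eq_right.2 hseg]
    exact (convex_segment x y).isPreconnected
  obtain ⟨z, hz1, hz2⟩ := preconn_frontier hpre (t := (Subtype.val : W → V) ⁻¹' A)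
    ⟨⟨x, hAW hx⟩, left_mem_segment ℝ x y, hx⟩
    ⟨⟨y, hy⟩, right_mem_segment ℝ x y, hyA⟩
  rw [frontier_eq_closure_inter_closure] at hz2
  have hzA : (z : V) ∈ closure A := by
    have h' := hz2.1
    rw [closure_subtype, Subtype.image_preimage_coe, Set.inter_eq_right.2 hAW] at h'
    exact h'
  have hzA' : (z : V) ∈ closure (W \ A) := by
    have h' := hz2.2
    rw [closure_subtype] at h'
    have himg : (Subtype.val : W → V) '' ((Subtype.val : W → V) ⁻¹' A)ᶜ = W \ A := by
      rw [← Set.preimage_compl, Subtype.image_preimage_coe]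
      ext v
      simp [Set.mem_diff, And.comm]
    rwa [himg] at h'
  have hzseg : (z : V) ∈ segment ℝ x y := hz1
  obtain ⟨a, b, ha, hb, hab, hz⟩ := hzseg
  refine ⟨z, ⟨⟨z.2, hzA⟩, hzA'⟩, ?_, ?_⟩
  · have hxz : x - (z : V) = b • (x - y) := by
      have ha' : a = 1 - b := by linarith
      subst ha'
      rw [← hz]
      module
    have hb1 : b ≤ 1 := by linarith
    rw [dist_eq_norm, dist_eq_norm, hxz, norm_smul, Real.norm_of_nonneg hb]
    nlinarith [norm_nonneg (x - y)]
  · have hyz : y - (z : V) = a • (y - x) := by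
      have hb' : b = 1 - a := by linarith
      subst hb'
      rw [← hz]
      module
    have ha1 : a ≤ 1 := by linarith
    rw [dist_eq_norm, dist_eq_norm, hyz, norm_smul, Real.norm_of_nonneg ha,
      show ‖x - y‖ = ‖y - x‖ by rw [← norm_neg, neg_sub]]
    nlinarith [norm_nonneg (y - x)]

/- The relative boundary of `A` in the subspace topology of `W` is
`W ∩ closure A ∩ closure (W \ A)`; `dist(w, ∂A)` is `Metric.infDist`. -/
theorem stmt_2 {V : Type*} [NormedAddCommGroup V] [NormedSpace ℝ V]
    [MeasurableSpace V] [BorelSpace V]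
    {W : Set V} (hW : Convex ℝ W)
    {Ω : Type*} [MeasurableSpace Ω] (P : Measure Ω) [IsProbabilityMeasure P]
    (X Y : Ω → V) (R : Ω → ℝ)
    (hX : Measurable X) (hY : Measurable Y) (hR : Measurable R)
    (hXW : ∀ ω, X ω ∈ W) (hYW : ∀ ω, Y ω ∈ W) (hR0 : ∀ ω, 0 ≤ R ω)
    (A : Set V) (hAW : A ⊆ W) (hA : MeasurableSet A) :
    |(P {ω | X ω ∈ A}).toReal - (P {ω | Y ω ∈ A}).toReal| ≤
      (P {ω | Metric.infDist (X ω) (W ∩ closure A ∩ closure (W \ A)) < R ω ∧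
              Metric.infDist (Y ω) (W ∩ closure A ∩ closure (W \ A)) < R ω}).toReal +
      (P {ω | R ω ≤ ‖X ω - Y ω‖}).toReal := by
  set B := W ∩ closure A ∩ closure (W \ A) with hB
  set S := {ω | X ω ∈ A}
  set T := {ω | Y ω ∈ A}
  set E1 := {ω | Metric.infDist (X ω) B < R ω ∧ Metric.infDist (Y ω) B < R ω}
  set E2 := {ω | R ω ≤ ‖X ω - Y ω‖}
  have hST : S \ T ⊆ E1 ∪ E2 := by
    rintro ω ⟨hS, hT⟩
    by_cases hcase : R ω ≤ ‖X ω - Y ω‖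
    · exact Or.inr hcase
    · push_neg at hcase
      obtain ⟨z, hzB, hd1, hd2⟩ := key_lemma hW hAW hS (hYW ω) hT
      refine Or.inl ⟨?_, ?_⟩
      · calc Metric.infDist (X ω) B ≤ dist (X ω) z := Metric.infDist_le_dist_of_mem hzB
          _ ≤ dist (X ω) (Y ω) := hd1
          _ = ‖X ω - Y ω‖ := dist_eq_norm _ _
          _ < R ω := hcase
      · calc Metric.infDist (Y ω) B ≤ dist (Y ω) z := Metric.infDist_le_dist_of_mem hzB
          _ ≤ dist (X ω) (Y ω) := hd2
          _ = ‖X ω - Y ω‖ := dist_eq_norm _ _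
          _ < R ω := hcase
  have hTS : T \ S ⊆ E1 ∪ E2 := by
    rintro ω ⟨hT, hS⟩
    by_cases hcase : R ω ≤ ‖X ω - Y ω‖
    · exact Or.inr hcase
    · push_neg at hcase
      obtain ⟨z, hzB, hd1, hd2⟩ := key_lemma hW hAW hT (hXW ω) hS
      refine Or.inl ⟨?_, ?_⟩
      · calc Metric.infDist (X ω) B ≤ dist (X ω) z := Metric.infDist_le_dist_of_mem hzB
          _ ≤ dist (Y ω) (X ω) := hd2
          _ = ‖X ω - Y ω‖ := by rw [dist_eq_norm, ← norm_neg, neg_sub]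
          _ < R ω := hcase
      · calc Metric.infDist (Y ω) B ≤ dist (Y ω) z := Metric.infDist_le_dist_of_mem hzB
          _ ≤ dist (Y ω) (X ω) := hd1
          _ = ‖X ω - Y ω‖ := by rw [dist_eq_norm, ← norm_neg, neg_sub]
          _ < R ω := hcase
  have key : ∀ {U U' : Set Ω}, U \ U' ⊆ E1 ∪ E2 →
      (P U).toReal - (P U').toReal ≤ (P E1).toReal + (P E2).toReal := by
    intro U U' hUU
    have h1 : P U ≤ P U' + (P E1 + P E2) := by
      calc P U ≤ P (U' ∪ (U \ U')) :=
            measure_mono (by intro ω hω; by_cases h : ω ∈ U' <;> simp [h, hω])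
        _ ≤ P U' + P (U \ U') := measure_union_le _ _
        _ ≤ P U' + P (E1 ∪ E2) := add_le_add_right (measure_mono hUU) _
        _ ≤ P U' + (P E1 + P E2) := add_le_add_right (measure_union_le _ _) _
    have hfin : P U' + (P E1 + P E2) ≠ ⊤ := by
      simp [measure_ne_top, ENNReal.add_ne_top]
    have h2 := ENNReal.toReal_mono hfin h1
    rw [ENNReal.toReal_add (measure_ne_top _ _)
        (ENNReal.add_ne_top.2 ⟨measure_ne_top _ _, measure_ne_top _ _⟩),
      ENNReal.toReal_add (measure_ne_top _ _) (measure_ne_top _ _)] at h2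
    linarith
  rw [abs_sub_le_iff]
  exact ⟨key hST, key hTS⟩
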